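/- Let 2 ≤ k ≤ n/4. Every point x ∈ {0,1}^n in the inner Pareto set S_I* = {x : k ≤ |x|₁ ≤ n-k} strictly dominates (with respect to maximizing (f1,f2) of OneJumpZeroJump_{n,k}) every point y with 1 ≤ |y|₁ ≤ k-1 or n-k+1 ≤ |y|₁ ≤ n-1. -/

import Mathlib

/-- Number of one-bits of a bit string. -/
def onesCount {n : ℕ} (x : Fin n → Bool) : ℕ :=
  (Finset.univ.filter (fun i => x i = true)).card

/-- Number of zero-bits of a bit string. -/
def zerosCount {n : ℕ} (x : Fin n → Bool) : ℕ :=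
  (Finset.univ.filter (fun i => x i = false)).card

/-- First objective of OneJumpZeroJump_{n,k}. -/
def ojzjF1 (n k : ℕ) (x : Fin n → Bool) : ℤ :=
  if onesCount x ≤ n - k ∨ x = (fun _ => true) then (k : ℤ) + onesCount x
  else (n : ℤ) - onesCount x

/-- Second objective of OneJumpZeroJump_{n,k}. -/
def ojzjF2 (n k : ℕ) (x : Fin n → Bool) : ℤ :=
  if zerosCount x ≤ n - k ∨ x = (fun _ => false) then (k : ℤ) + zerosCount x
  else (n : ℤ) - zerosCount x

lemma ones_add_zeros {n : ℕ} (x : Fin n → Bool) : onesCount x + zerosCount x = n := by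
  unfold onesCount zerosCount
  have := Finset.card_filter_add_card_filter_not
    (s := (Finset.univ : Finset (Fin n))) (p := fun i => x i = true)
  simpa using this

lemma onesCount_le {n : ℕ} (x : Fin n → Bool) : onesCount x ≤ n :=
  le_of_le_of_eq (Nat.le_add_right _ _) (ones_add_zeros x)

lemma ne_false_of_ones {n : ℕ} {y : Fin n → Bool} (h : 1 ≤ onesCount y) :
    y ≠ (fun _ => false) := by
  intro he; subst he
  simp [onesCount] at h

lemma onesCount_true (n : ℕ) : onesCount (fun _ : Fin n => true) = n := by
  simp [onesCount]

/-- Every point of the inner Pareto set strictly dominates every point in the gap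
regions (with between 1 and k-1 zeroes or ones). -/
theorem stmt_2 (n k : ℕ) (hk2 : 2 ≤ k) (hk : 4 * k ≤ n)
    (x y : Fin n → Bool)
    (hx : k ≤ onesCount x ∧ onesCount x ≤ n - k)
    (hy : (1 ≤ onesCount y ∧ onesCount y ≤ k - 1) ∨
          (n - k + 1 ≤ onesCount y ∧ onesCount y ≤ n - 1)) :
    ojzjF1 n k y ≤ ojzjF1 n k x ∧ ojzjF2 n k y ≤ ojzjF2 n k x ∧
      (ojzjF1 n k y < ojzjF1 n k x ∨ ojzjF2 n k y < ojzjF2 n k x) := by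
  obtain ⟨hx1, hx2⟩ := hx
  have hkn : k ≤ n := le_trans (by omega) hk
  have hzx : zerosCount x = n - onesCount x := by
    have := ones_add_zeros x; omega
  have hzy : zerosCount y = n - onesCount y := by
    have := ones_add_zeros y; omega
  have hxn := onesCount_le x
  have hyn := onesCount_le y
  -- values at x
  have hf1x : ojzjF1 n k x = (k : ℤ) + onesCount x := by
    unfold ojzjF1; rw [if_pos (Or.inl hx2)]
  have hf2x : ojzjF2 n k x = (k : ℤ) + zerosCount x := by
    unfold ojzjF2; rw [if_pos (Or.inl (by omega))]
  have hzx2 : (k : ℤ) ≤ zerosCount x := by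
    have : k ≤ zerosCount x := by omega
    exact_mod_cast this
  rcases hy with ⟨h1, h2⟩ | ⟨h1, h2⟩
  · -- few ones
    have hf1y : ojzjF1 n k y = (k : ℤ) + onesCount y := by
      unfold ojzjF1; rw [if_pos (Or.inl (by omega))]
    have hf2y : ojzjF2 n k y = (n : ℤ) - zerosCount y := by
      unfold ojzjF2
      rw [if_neg]
      push_neg
      exact ⟨by omega, ne_false_of_ones h1⟩
    constructor
    · rw [hf1y, hf1x]
      have : onesCount y ≤ onesCount x := by omega
      exact add_le_add_right (by exact_mod_cast this) _
    constructor
    · rw [hf2y, hf2x]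
      have h3 : (n : ℤ) - zerosCount y = onesCount y := by
        rw [hzy]; push_cast [Nat.cast_sub hyn]; ring
      rw [h3]
      have : (onesCount y : ℤ) ≤ k := by exact_mod_cast (by omega : onesCount y ≤ k)
      linarith
    · left
      rw [hf1y, hf1x]
      have : onesCount y < onesCount x := by omega
      exact add_lt_add_right (by exact_mod_cast this) _
  · -- many ones
    have hyt : y ≠ (fun _ => true) := by
      intro he
      rw [he, onesCount_true] at h2
      omega
    have hf1y : ojzjF1 n k y = (n : ℤ) - onesCount y := by
      unfold ojzjF1
      rw [if_neg]
      push_neg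
      exact ⟨by omega, hyt⟩
    have hf2y : ojzjF2 n k y = (k : ℤ) + zerosCount y := by
      unfold ojzjF2; rw [if_pos (Or.inl (by omega))]
    constructor
    · rw [hf1y, hf1x]
      have : (onesCount y : ℤ) ≥ (n : ℤ) - k := by
        have : n - k ≤ onesCount y := by omega
        have := Nat.cast_le (α := ℤ).mpr this
        push_cast [Nat.cast_sub hkn] at this ⊢
        linarith
      have hkx : (k : ℤ) ≤ onesCount x := by exact_mod_cast hx1
      linarith
    constructor
    · rw [hf2y, hf2x]
      have : zerosCount y ≤ zerosCount x := by omega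
      exact add_le_add_right (by exact_mod_cast this) _
    · right
      rw [hf2y, hf2x]
      have : zerosCount y < zerosCount x := by omega
      exact add_lt_add_right (by exact_mod_cast this) _
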